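/- With the notation of the context, for every nonzero x ∈ K there exist unique integers i and j with 0 ≤ i < s and 0 ≤ j < t such that ω_s^i · ω_{t²}^{1+jt} · x^{p^{n(1+jt)}} = ω_{t²} · x. -/

import Mathlib

/-- Let `p` be a prime, `t > 1` coprime to `p`, `n` the multiplicative order of `p` mod `t²`,
`s := (p^(nt) − 1)/(t(p^n − 1))`, `K` the finite field with `p^(nt)` elements, and
`ωs, ωt2 ∈ K` primitive `s`-th and `t²`-th roots of unity respectively.  Then for every
nonzero `x ∈ K` there exist unique integers `i, j` with `0 ≤ i < s` and `0 ≤ j < t` such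
that `ωs^i · ωt2^(1+jt) · x^(p^(n(1+jt))) = ωt2 · x`. -/
theorem stmt2 (p t n s : ℕ) (hp : p.Prime) (ht : 1 < t) (htp : Nat.Coprime t p)
    (hn : 0 < n) (hnmod : p ^ n ≡ 1 [MOD t ^ 2])
    (hnmin : ∀ m : ℕ, 0 < m → p ^ m ≡ 1 [MOD t ^ 2] → n ≤ m)
    (hs : s = (p ^ (n * t) - 1) / (t * (p ^ n - 1)))
    (K : Type) [Field K] [Fintype K] (hK : Fintype.card K = p ^ (n * t))
    (ωs ωt2 : K) (hωs : IsPrimitiveRoot ωs s) (hωt2 : IsPrimitiveRoot ωt2 (t ^ 2)) :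
    ∀ x : K, x ≠ 0 →
      ∃! ij : ℕ × ℕ, ij.1 < s ∧ ij.2 < t ∧
        ωs ^ ij.1 * ωt2 ^ (1 + ij.2 * t) * x ^ (p ^ (n * (1 + ij.2 * t))) = ωt2 * x := by
  intro x hx
  set q := p ^ n with hq_def
  have hq2 : 2 ≤ q := Nat.one_lt_pow hn.ne' hp.one_lt
  have hq1 : 1 ≤ q := by omega
  have ht0 : 0 < t := by omega
  -- t^2 ∣ q - 1
  have ht2dvd : t ^ 2 ∣ q - 1 := (Nat.modEq_iff_dvd' hq1).mp hnmod.symm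
  have htdvd : t ∣ q - 1 := dvd_trans (dvd_pow_self t two_ne_zero) ht2dvd
  have htdvdZ : (t : ℤ) ∣ (q : ℤ) - 1 := by
    have := Int.natCast_dvd_natCast.mpr htdvd
    rwa [Nat.cast_sub hq1] at this
  set σ := ∑ k ∈ Finset.range t, q ^ k with hσ_def
  have hσcast : (σ : ℤ) = ∑ k ∈ Finset.range t, (q : ℤ) ^ k := by
    simp only [hσ_def]
    push_cast
    rfl
  have hσint : ((q : ℤ) - 1) * (σ : ℤ) = (q : ℤ) ^ t - 1 := by
    rw [hσcast, mul_comm]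
    exact geom_sum_mul _ _
  have hσt2 : (t : ℤ) ^ 2 ∣ (σ : ℤ) - t := by
    have hrw : (σ : ℤ) - t = ∑ k ∈ Finset.range t, ((q : ℤ) ^ k - 1) := by
      rw [hσcast, Finset.sum_sub_distrib]
      simp
    rw [hrw]
    refine Finset.dvd_sum fun k _ => ?_
    have h1 : (t : ℤ) ^ 2 ∣ (q : ℤ) - 1 := by
      have := Int.natCast_dvd_natCast.mpr ht2dvd
      rwa [Nat.cast_sub hq1, Nat.cast_pow] at this
    calc (t : ℤ) ^ 2 ∣ (q : ℤ) - 1 := h1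
      _ ∣ (q : ℤ) ^ k - 1 := by simpa using sub_dvd_pow_sub_pow (q : ℤ) 1 k
  have hσget : t ≤ σ := by
    calc t = ∑ _k ∈ Finset.range t, 1 := by simp
      _ ≤ σ := Finset.sum_le_sum fun k _ => Nat.one_le_pow _ _ (by omega)
  have htσ : t ∣ σ := by
    have h1 : (t : ℤ) ∣ (σ : ℤ) - t := dvd_trans (dvd_pow_self (t : ℤ) two_ne_zero) hσt2
    have h2 : (t : ℤ) ∣ (σ : ℤ) := by
      have := dvd_add h1 (dvd_refl (t : ℤ))
      simpa using this
    exact_mod_cast h2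
  -- s = σ / t
  have hqt1 : 1 ≤ q ^ t := Nat.one_le_pow _ _ (by omega)
  have hσnat : (q - 1) * σ = q ^ t - 1 := by
    have h1 : ((q - 1 : ℕ) : ℤ) = (q : ℤ) - 1 := by
      rw [Nat.cast_sub hq1]; norm_num
    have h2 : ((q ^ t - 1 : ℕ) : ℤ) = (q : ℤ) ^ t - 1 := by
      rw [Nat.cast_sub hqt1]; push_cast; ring
    have : (((q - 1) * σ : ℕ) : ℤ) = ((q ^ t - 1 : ℕ) : ℤ) := by
      push_cast [h1, h2]
      rw [h1, h2] at *
      exact_mod_cast hσint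
    exact_mod_cast this
  have hseq : s = σ / t := by
    rw [hs, pow_mul, ← hq_def, ← hσnat, mul_comm t (q - 1)]
    exact Nat.mul_div_mul_left σ t (by omega)
  have hst : s * t = σ := by rw [hseq]; exact Nat.div_mul_cancel htσ
  have hs0 : 0 < s := by
    rcases Nat.eq_zero_or_pos s with h | h
    · rw [h, zero_mul] at hst; omega
    · exact h
  -- s ≡ 1 mod t, coprime
  have hsmodeq : s ≡ 1 [MOD t] := by
    have h1 : (t : ℤ) * ((s : ℤ) - 1) = (σ : ℤ) - t := by
      push_cast [← hst]; ring
    have h2 : (t : ℤ) ∣ (s : ℤ) - 1 := by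
      have h3 : (t : ℤ) * t ∣ (t : ℤ) * ((s : ℤ) - 1) := by
        rw [h1]; rw [pow_two] at hσt2; exact hσt2
      exact (mul_dvd_mul_iff_left (by exact_mod_cast ht0.ne' : (t : ℤ) ≠ 0)).mp h3
    refine Nat.modEq_iff_dvd.mpr ?_
    have hc : ((1 : ℕ) : ℤ) - (s : ℤ) = -((s : ℤ) - 1) := by push_cast; ring
    rw [hc]
    exact h2.neg_right
  have hcop : Nat.Coprime s t := by
    have h1 : s % t = 1 := by
      have := hsmodeq
      unfold Nat.ModEq at this
      rwa [Nat.mod_eq_of_lt ht] at this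
    unfold Nat.Coprime
    rw [Nat.gcd_comm, Nat.gcd_rec, h1, Nat.gcd_one_left]
  -- N and x^N = 1
  set N := q ^ t - 1 with hN_def
  have hxN : x ^ N = 1 := by
    rw [hN_def]
    have := FiniteField.pow_card_sub_one_eq_one x hx
    rwa [hK, pow_mul, ← hq_def] at this
  have hord : orderOf x ∣ N := orderOf_dvd_of_pow_eq_one hxN
  have hNst : N = s * (t * (q - 1)) := by
    rw [← hσnat, ← hst]; ring
  -- key congruence for exponents
  have hcong : ∀ m : ℕ, x ^ (s * (q ^ m - 1)) = x ^ (s * (q - 1) * m) := by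
    intro m
    set u : Kˣ := Units.mk0 x hx with hu
    have huN : u ^ N = 1 := Units.ext (by rw [Units.val_pow_eq_pow_val]; simpa [hu] using hxN)
    have hordu : orderOf u ∣ N := orderOf_dvd_of_pow_eq_one huN
    suffices h : u ^ (s * (q ^ m - 1)) = u ^ (s * (q - 1) * m) by
      have h2 := congrArg Units.val h
      simpa [Units.val_pow_eq_pow_val, hu] using h2
    rw [pow_eq_pow_iff_modEq]
    refine Nat.ModEq.of_dvd hordu ?_
    rw [Nat.modEq_iff_dvd]
    have hqm1 : 1 ≤ q ^ m := Nat.one_le_pow _ _ (by omega)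
    have hA : ((s * (q ^ m - 1) : ℕ) : ℤ) = (s : ℤ) * ((q : ℤ) ^ m - 1) := by
      push_cast [Nat.cast_sub hqm1]; ring
    have hB : ((s * (q - 1) * m : ℕ) : ℤ) = (s : ℤ) * ((q : ℤ) - 1) * m := by
      push_cast [Nat.cast_sub hq1]; ring
    have hNc : ((N : ℕ) : ℤ) = (s : ℤ) * ((t : ℤ) * ((q : ℤ) - 1)) := by
      rw [hNst]; push_cast [Nat.cast_sub hq1]; ring
    rw [hA, hB, hNc]
    have hinner : ((q : ℤ) - 1) * t ∣ ((q : ℤ) ^ m - 1) - ((q : ℤ) - 1) * m := by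
      have hgeom : (q : ℤ) ^ m - 1 = ((q : ℤ) - 1) * ∑ k ∈ Finset.range m, (q : ℤ) ^ k := by
        rw [mul_comm]; exact (geom_sum_mul _ _).symm
      have hrw : ((q : ℤ) ^ m - 1) - ((q : ℤ) - 1) * m
          = ((q : ℤ) - 1) * ∑ k ∈ Finset.range m, ((q : ℤ) ^ k - 1) := by
        rw [hgeom, Finset.sum_sub_distrib]
        simp only [Finset.sum_const, Finset.card_range, smul_eq_mul, mul_one]
        ring
      rw [hrw]
      refine mul_dvd_mul_left _ (Finset.dvd_sum fun k _ => ?_)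
      calc (t : ℤ) ∣ (q : ℤ) - 1 := htdvdZ
        _ ∣ (q : ℤ) ^ k - 1 := by simpa using sub_dvd_pow_sub_pow (q : ℤ) 1 k
    have : (s : ℤ) * ((t : ℤ) * ((q : ℤ) - 1)) ∣
        (s : ℤ) * (((q : ℤ) ^ m - 1) - ((q : ℤ) - 1) * m) := by
      refine mul_dvd_mul_left _ ?_
      rwa [mul_comm ((q : ℤ) - 1) (t : ℤ)] at hinner
    have heq : (s : ℤ) * ((q : ℤ) - 1) * m - (s : ℤ) * ((q : ℤ) ^ m - 1)
        = -((s : ℤ) * (((q : ℤ) ^ m - 1) - ((q : ℤ) - 1) * m)) := by ring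
    rw [heq]
    exact this.neg_right
  -- the y, v, w objects
  have hωt2_ne : ωt2 ≠ 0 := hωt2.ne_zero (by positivity)
  set y : ℕ → K := fun j => ωt2 ^ (j * t) * x ^ (q ^ (1 + j * t) - 1) with hy
  have hy_ne : ∀ j, y j ≠ 0 := fun j =>
    mul_ne_zero (pow_ne_zero _ hωt2_ne) (pow_ne_zero _ hx)
  have hE : ∀ i j : ℕ,
      (ωs ^ i * ωt2 ^ (1 + j * t) * x ^ (p ^ (n * (1 + j * t))) = ωt2 * x)
      ↔ ωs ^ i * y j = 1 := by
    intro i j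
    have hqm : p ^ (n * (1 + j * t)) = q ^ (1 + j * t) := by
      rw [pow_mul]
    have hQ1 : 1 ≤ q ^ (1 + j * t) := Nat.one_le_pow _ _ (by omega)
    have h1 : x ^ (q ^ (1 + j * t)) = x ^ (q ^ (1 + j * t) - 1) * x := by
      conv_lhs => rw [show q ^ (1 + j * t) = (q ^ (1 + j * t) - 1) + 1 from
        (Nat.sub_add_cancel hQ1).symm]
      rw [pow_succ]
    have key : ωs ^ i * ωt2 ^ (1 + j * t) * x ^ (p ^ (n * (1 + j * t)))
        = (ωs ^ i * y j) * (ωt2 * x) := by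
      rw [hqm, h1, pow_add, pow_one, hy]
      ring
    rw [key]
    rw [mul_left_eq_self₀]
    constructor
    · rintro (h | h)
      · exact h
      · exact absurd h (mul_ne_zero hωt2_ne hx)
    · exact Or.inl
  set w := x ^ (s * (q - 1)) with hw_def
  have hw_ne : w ≠ 0 := pow_ne_zero _ hx
  have hwt : w ^ t = 1 := by
    rw [hw_def, ← pow_mul, show s * (q - 1) * t = N by rw [hNst]; ring]
    exact hxN
  set v := ωt2 ^ (s * t) with hv_def
  have hvprim : IsPrimitiveRoot v t := by
    have h1 : IsPrimitiveRoot (ωt2 ^ s) (t ^ 2) :=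
      hωt2.pow_of_coprime s (hcop.pow_right 2)
    have h2 : IsPrimitiveRoot ((ωt2 ^ s) ^ t) t :=
      h1.pow (by positivity) (sq t)
    rwa [← pow_mul] at h2
  have hys : ∀ j, (y j) ^ s = v ^ j * w := by
    intro j
    rw [hy]
    simp only
    rw [mul_pow, ← pow_mul, ← pow_mul]
    have e1 : ωt2 ^ (j * t * s) = v ^ j := by
      rw [hv_def, ← pow_mul]
      ring_nf
    have e2 : x ^ ((q ^ (1 + j * t) - 1) * s) = w := by
      rw [mul_comm, hcong (1 + j * t), pow_mul, ← hw_def, pow_add, pow_one,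
        show j * t = t * j from mul_comm j t, pow_mul, hwt, one_pow, mul_one]
    rw [e1, e2]
  -- find j0
  haveI : NeZero t := ⟨by omega⟩
  haveI : NeZero s := ⟨by omega⟩
  have hwinv : (w⁻¹) ^ t = 1 := by rw [inv_pow, hwt, inv_one]
  obtain ⟨j₀, hj₀t, hj₀⟩ := hvprim.eq_pow_of_pow_eq_one hwinv
  have hyj₀ : (y j₀) ^ s = 1 := by
    rw [hys, hj₀, inv_mul_cancel₀ hw_ne]
  have hyj₀inv : ((y j₀)⁻¹) ^ s = 1 := by rw [inv_pow, hyj₀, inv_one]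
  obtain ⟨i₀, hi₀s, hi₀⟩ := hωs.eq_pow_of_pow_eq_one hyj₀inv
  refine ⟨(i₀, j₀), ⟨hi₀s, hj₀t, ?_⟩, ?_⟩
  · rw [hE]
    rw [hi₀, inv_mul_cancel₀ (hy_ne j₀)]
  · rintro ⟨i, j⟩ ⟨his, hjt, hEij⟩
    rw [hE] at hEij
    have hωsi : ωs ^ i = (y j)⁻¹ := eq_inv_of_mul_eq_one_left hEij
    have h1 : (y j) ^ s = 1 := by
      have h2 : ((y j)⁻¹) ^ s = 1 := by
        rw [← hωsi, ← pow_mul, mul_comm, pow_mul, hωs.pow_eq_one, one_pow]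
      have := congrArg (·⁻¹) h2
      simpa using this
    have hvj : v ^ j = w⁻¹ := by
      have h3 : v ^ j * w = 1 := by rw [← hys, h1]
      exact eq_inv_of_mul_eq_one_left h3
    have hjj : j = j₀ := hvprim.pow_inj hjt hj₀t (hvj.trans hj₀.symm)
    subst hjj
    have hii : i = i₀ := hωs.pow_inj his hi₀s (by rw [hωsi, ← hi₀])
    simp [hii]
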